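/- With the setup of the previous statement, there is an absolute constant C₀ such that for u ≥ 2, P(sup_n ξ(n) > u) ≤ exp(-u²/2 + C₀). -/

import Mathlib

open MeasureTheory ProbabilityTheory Real

theorem talagrand_example_sup_tail {Ω : Type*} [MeasurableSpace Ω]
    (μ : Measure Ω) [IsProbabilityMeasure μ] (ε : ℕ → Ω → ℝ)
    (hmeas : ∀ n, Measurable (ε n))
    (hindep : iIndepFun ε μ)
    (hsymm : ∀ n, ∀ x : ℝ, μ {ω | x < ε n ω} = μ {ω | ε n ω < -x})
    (htail : ∀ n, ∀ x : ℝ, 0 ≤ x →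
      μ {ω | x < |ε n ω|} = ENNReal.ofReal (Real.exp (-(x ^ 2) / 2)))
    (ξ : ℕ → Ω → ℝ)
    (hξ : ∀ n ω, ξ n ω = ε n ω / Real.sqrt (Real.log ((n : ℝ) + Real.exp 1 - 1))) :
    ∃ C₀ : ℝ, ∀ u : ℝ, 2 ≤ u →
      μ {ω | u < ⨆ n ∈ {n : ℕ | 1 ≤ n}, ξ n ω}
        ≤ ENNReal.ofReal (Real.exp (-(u ^ 2) / 2 + C₀)) := by
  refine ⟨3, fun u hu => ?_⟩
  have hu0 : (0:ℝ) < u := lt_of_lt_of_le (by norm_num) hu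
  -- Step 1: inclusion into a countable union
  have hsub : {ω | u < ⨆ n ∈ {n : ℕ | 1 ≤ n}, ξ n ω}
      ⊆ ⋃ k : ℕ, {ω | u < ξ (k + 1) ω} := by
    intro ω hω
    simp only [Set.mem_setOf_eq] at hω
    by_contra hc
    simp only [Set.mem_iUnion, Set.mem_setOf_eq, not_exists, not_lt] at hc
    have hle : ∀ n : ℕ, (⨆ _ : n ∈ {n : ℕ | 1 ≤ n}, ξ n ω) ≤ u := by
      intro n
      rcases Nat.eq_zero_or_pos n with h0 | h1
      · subst h0
        have hnot : ¬ (0 ∈ {n : ℕ | 1 ≤ n}) := by simp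
        haveI : IsEmpty (0 ∈ {n : ℕ | 1 ≤ n}) := ⟨hnot⟩
        rw [Real.iSup_of_isEmpty]
        exact hu0.le
      · obtain ⟨k, rfl⟩ : ∃ k, n = k + 1 := ⟨n - 1, by omega⟩
        have hmem : k + 1 ∈ {n : ℕ | 1 ≤ n} := by simp
        rw [ciSup_pos hmem]
        exact hc k
    exact absurd (ciSup_le hle) (not_le.mpr hω)
  -- Step 2+3: per-term bound
  have hterm : ∀ k : ℕ, μ {ω | u < ξ (k + 1) ω}
      ≤ ENNReal.ofReal (Real.exp (-(u ^ 2) / 2) * Real.exp 2 * (1 / ((k : ℝ) + 1) ^ 2)) := by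
    intro k
    set a : ℝ := ((k + 1 : ℕ) : ℝ) + Real.exp 1 - 1 with ha_def
    have hek : (1:ℝ) ≤ Real.exp 1 := by linarith [Real.add_one_le_exp (1:ℝ)]
    have hka : ((k : ℝ) + 1) ≤ a := by
      rw [ha_def]; push_cast; linarith
    have hea : Real.exp 1 ≤ a := by
      rw [ha_def]; push_cast; linarith [(Nat.cast_nonneg k : (0:ℝ) ≤ (k:ℝ))]
    have ha0 : (0:ℝ) < a := lt_of_lt_of_le (Real.exp_pos 1) hea
    have hL : (1:ℝ) ≤ Real.log a := (Real.le_log_iff_exp_le ha0).mpr hea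
    set L : ℝ := Real.log a with hL_def
    set s : ℝ := Real.sqrt L with hs_def
    have hs0 : (0:ℝ) < s := Real.sqrt_pos.mpr (by linarith)
    have hset : {ω | u < ξ (k + 1) ω} = {ω | u * s < ε (k + 1) ω} := by
      ext ω
      simp only [Set.mem_setOf_eq, hξ]
      rw [lt_div_iff₀ hs0]
    have hsubabs : {ω | u * s < ε (k + 1) ω} ⊆ {ω | u * s < |ε (k + 1) ω|} := by
      intro ω h
      simp only [Set.mem_setOf_eq] at h ⊢
      exact lt_of_lt_of_le h (le_abs_self _)
    have hus0 : 0 ≤ u * s := le_of_lt (mul_pos hu0 hs0)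
    have hμ : μ {ω | u < ξ (k + 1) ω} ≤ ENNReal.ofReal (Real.exp (-((u * s) ^ 2) / 2)) := by
      rw [hset, ← htail (k + 1) (u * s) hus0]
      exact measure_mono hsubabs
    refine hμ.trans (ENNReal.ofReal_le_ofReal ?_)
    have hsq : (u * s) ^ 2 = u ^ 2 * L := by
      rw [mul_pow, hs_def, Real.sq_sqrt (by linarith : (0:ℝ) ≤ L)]
    rw [hsq]
    -- exp (-(u^2 * L)/2) ≤ exp(-(u^2)/2) * exp 2 * (1/(k+1)^2)
    have hu4 : (4:ℝ) ≤ u ^ 2 := by nlinarith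
    have h1 : Real.exp (-(u ^ 2 * L) / 2)
        = Real.exp (-(u ^ 2) / 2) * Real.exp (-(u ^ 2 * (L - 1)) / 2) := by
      rw [← Real.exp_add]; ring_nf
    have h2 : Real.exp (-(u ^ 2 * (L - 1)) / 2) ≤ Real.exp (-2 * (L - 1)) := by
      apply Real.exp_le_exp.mpr
      nlinarith
    have h3 : Real.exp (-2 * (L - 1)) = Real.exp 2 * (1 / a ^ 2) := by
      have : (-2 : ℝ) * (L - 1) = 2 + (-(2 * L)) := by ring
      rw [this, Real.exp_add]
      congr 1
      rw [Real.exp_neg, show (2:ℝ) * L = L + L by ring, Real.exp_add, hL_def,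
        Real.exp_log ha0]
      rw [one_div, sq]
    have h4 : (1 : ℝ) / a ^ 2 ≤ 1 / ((k : ℝ) + 1) ^ 2 := by
      apply one_div_le_one_div_of_le
      · positivity
      · apply pow_le_pow_left₀ (by positivity) hka
    calc Real.exp (-(u ^ 2 * L) / 2)
        = Real.exp (-(u ^ 2) / 2) * Real.exp (-(u ^ 2 * (L - 1)) / 2) := h1
      _ ≤ Real.exp (-(u ^ 2) / 2) * (Real.exp 2 * (1 / a ^ 2)) := by
          rw [← h3]; exact mul_le_mul_of_nonneg_left h2 (Real.exp_pos _).le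
      _ ≤ Real.exp (-(u ^ 2) / 2) * (Real.exp 2 * (1 / ((k : ℝ) + 1) ^ 2)) := by
          apply mul_le_mul_of_nonneg_left _ (Real.exp_pos _).le
          exact mul_le_mul_of_nonneg_left h4 (Real.exp_pos _).le
      _ = Real.exp (-(u ^ 2) / 2) * Real.exp 2 * (1 / ((k : ℝ) + 1) ^ 2) := by ring
  -- Step 4: sum up
  set c : ℝ := Real.exp (-(u ^ 2) / 2) * Real.exp 2 with hc_def
  have hc0 : 0 ≤ c := by positivity
  have hsummable : Summable (fun k : ℕ => (1 : ℝ) / ((k : ℝ) + 1) ^ 2) := by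
    have h := hasSum_zeta_two.summable
    have := (summable_nat_add_iff 1).mpr h
    refine this.congr fun k => ?_
    push_cast
    ring
  have htsum : ∑' k : ℕ, (1 : ℝ) / ((k : ℝ) + 1) ^ 2 = π ^ 2 / 6 := by
    have h := hasSum_zeta_two.summable
    have h0 := Summable.tsum_eq_zero_add h
    rw [hasSum_zeta_two.tsum_eq] at h0
    simp only [Nat.cast_zero, Nat.cast_add, Nat.cast_one] at h0
    rw [show (1:ℝ) / (0:ℝ) ^ 2 = 0 by norm_num, zero_add] at h0
    rw [← h0]
  have hpi : π ^ 2 / 6 ≤ Real.exp 1 := by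
    nlinarith [Real.pi_lt_d2, Real.pi_pos, Real.exp_one_gt_d9]
  calc μ {ω | u < ⨆ n ∈ {n : ℕ | 1 ≤ n}, ξ n ω}
      ≤ μ (⋃ k : ℕ, {ω | u < ξ (k + 1) ω}) := measure_mono hsub
    _ ≤ ∑' k : ℕ, μ {ω | u < ξ (k + 1) ω} := measure_iUnion_le _
    _ ≤ ∑' k : ℕ, ENNReal.ofReal (c * (1 / ((k : ℝ) + 1) ^ 2)) :=
        ENNReal.tsum_le_tsum fun k => hterm k
    _ = ENNReal.ofReal (∑' k : ℕ, c * (1 / ((k : ℝ) + 1) ^ 2)) := by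
        rw [ENNReal.ofReal_tsum_of_nonneg (fun k => by positivity) (hsummable.mul_left c)]
    _ ≤ ENNReal.ofReal (Real.exp (-(u ^ 2) / 2 + 3)) := by
        apply ENNReal.ofReal_le_ofReal
        rw [tsum_mul_left, htsum]
        have : Real.exp (-(u ^ 2) / 2 + 3)
            = Real.exp (-(u ^ 2) / 2) * Real.exp 2 * Real.exp 1 := by
          rw [← Real.exp_add, ← Real.exp_add]; ring_nf
        rw [this, hc_def]
        have hcc : 0 ≤ Real.exp (-(u ^ 2) / 2) * Real.exp 2 := by positivity
        calc Real.exp (-(u ^ 2) / 2) * Real.exp 2 * (π ^ 2 / 6)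
            ≤ Real.exp (-(u ^ 2) / 2) * Real.exp 2 * Real.exp 1 :=
              mul_le_mul_of_nonneg_left hpi hcc
          _ = _ := rfl
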